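/- Convergence to the product measure: if all ρ_α > 0 and ω₀ is a probability measure on the finite product space X, then the solution ω_t = ∑_{G⊆L} a_G(t) R_G(ω₀) converges in total variation norm, as t → ∞, to the complete product measure R_L(ω₀) = ⊗_{i=0}^{n} (π_i.ω₀) of the one-site marginals of ω₀. -/

import Mathlib

open Finset

namespace Recombination

variable {n : ℕ} (X : Fin (n + 1) → Type*) [∀ i, Fintype (X i)] [∀ i, DecidableEq (X i)]

/-- (Signed) measures on the finite product space `X = X₀ × ⋯ × Xₙ`,
identified with their density functions. -/
abbrev Meas := (∀ i, X i) → ℝ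

/-- Total variation norm of a measure. -/
noncomputable def tv (ω : Meas X) : ℝ := ∑ x, |ω x|

/-- Total mass of a measure. -/
noncomputable def mass (ω : Meas X) : ℝ := ∑ x, ω x

/-- Positivity of a measure. -/
def Pos (ω : Meas X) : Prop := ∀ x, 0 ≤ ω x

/-- Marginal (pushforward under the coordinate projection onto the sites
satisfying `p`) of a measure. -/
noncomputable def marg (p : Fin (n + 1) → Prop) [DecidablePred p] (ω : Meas X) :
    (∀ i : {i // p i}, X i.1) → ℝ :=
  fun y => ∑ x : ∀ i, X i, if (∀ i : {i // p i}, x i.1 = y i) then ω x else 0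

/-- Product measure of a measure on the leading block (sites satisfying `p`)
and a measure on the trailing block. -/
noncomputable def prodM (p : Fin (n + 1) → Prop) [DecidablePred p]
    (f : (∀ i : {i // p i}, X i.1) → ℝ) (g : (∀ i : {i // ¬ p i}, X i.1) → ℝ) :
    Meas X :=
  fun x => f (fun i => x i.1) * g (fun i => x i.1)

open Classical in
/-- The elementary recombinator at link `α` (the link between sites `α` and `α+1`):
`R_α(ω) = ((π_{<α}.ω) ⊗ (π_{>α}.ω))/‖ω‖` for `ω ≠ 0`, and `R_α(0) = 0`. -/
noncomputable def R (α : Fin n) (ω : Meas X) : Meas X :=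
  if ω = 0 then 0 else
    (tv X ω)⁻¹ • prodM X (fun i => i.val ≤ α.val)
      (marg X (fun i => i.val ≤ α.val) ω) (marg X (fun i => ¬ i.val ≤ α.val) ω)

/-- The composite recombinator `R_G = ∏_{α ∈ G} R_α`. -/
noncomputable def RG (G : Finset (Fin n)) (ω : Meas X) : Meas X :=
  (G.sort (· ≤ ·)).foldr (fun α ν => R X α ν) ω

/-- The coefficient functions `a_G(t)` of the single-crossover model. -/
noncomputable def coeffA (ρ : Fin n → ℝ) (G : Finset (Fin n)) (t : ℝ) : ℝ :=
  (∏ α ∈ Gᶜ, Real.exp (-(ρ α * t))) * ∏ β ∈ G, (1 - Real.exp (-(ρ β * t)))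

/-- The coefficient functions `b_K(t) = exp(−t ∑_{α∈L∖K} ρ_α)`. -/
noncomputable def coeffB (ρ : Fin n → ℝ) (K : Finset (Fin n)) (t : ℝ) : ℝ :=
  Real.exp (-(∑ α ∈ Kᶜ, ρ α) * t)

/-- The linkage-disequilibrium operators `T_G = ∑_{H ⊇ G} (−1)^{|H∖G|} R_H`. -/
noncomputable def T (G : Finset (Fin n)) (ω : Meas X) : Meas X :=
  ∑ H ∈ (Finset.univ : Finset (Fin n)).powerset.filter (fun H => G ⊆ H),
    ((-1 : ℝ) ^ (H \ G).card) • RG X H ω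

/-- The solution `ω_t = ∑_{G⊆L} a_G(t) R_G(ω₀)` of the recombination equation. -/
noncomputable def sol (ρ : Fin n → ℝ) (ω₀ : Meas X) (t : ℝ) : Meas X :=
  ∑ G ∈ (Finset.univ : Finset (Fin n)).powerset, coeffA ρ G t • RG X G ω₀

/-- The one-site marginal at site `i`. -/
noncomputable def marg1 (i : Fin (n + 1)) (ω : Meas X) (y : X i) : ℝ :=
  ∑ x : ∀ j, X j, if x i = y then ω x else 0

section Aux

lemma pinprod (p : Fin (n + 1) → Prop) [DecidablePred p] (x₀ : ∀ i, X i) (g : ∀ i, X i → ℝ) :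
    (∑ x : ∀ i, X i, if (∀ i, p i → x i = x₀ i) then
        ∏ i ∈ Finset.univ.filter (fun i => ¬ p i), g i (x i) else 0)
      = ∏ i ∈ Finset.univ.filter (fun i => ¬ p i), ∑ a, g i a := by
  classical
  rw [← ((Equiv.piEquivPiSubtypeProd p X).symm.sum_comp
      (fun x => if (∀ i, p i → x i = x₀ i) then
        ∏ i ∈ Finset.univ.filter (fun i => ¬ p i), g i (x i) else 0)), Fintype.sum_prod_type]
  have key : ∀ (y : ∀ i : {i // p i}, X i.1) (z : ∀ i : {i // ¬ p i}, X i.1),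
      (if (∀ i, p i → (Equiv.piEquivPiSubtypeProd p X).symm (y, z) i = x₀ i) then
        ∏ i ∈ Finset.univ.filter (fun i => ¬ p i),
          g i ((Equiv.piEquivPiSubtypeProd p X).symm (y, z) i) else 0)
      = if y = (fun i : {i // p i} => x₀ i.1) then ∏ j : {i // ¬ p i}, g j.1 (z j) else 0 := by
    intro y z
    have hcond : (∀ i, p i → (Equiv.piEquivPiSubtypeProd p X).symm (y, z) i = x₀ i)
        ↔ y = (fun i : {i // p i} => x₀ i.1) := by
      constructor
      · intro h
        funext i
        have := h i.1 i.2
        rw [Equiv.piEquivPiSubtypeProd_symm_apply, dif_pos i.2] at this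
        exact this
      · intro h i hi
        rw [Equiv.piEquivPiSubtypeProd_symm_apply, dif_pos hi, h]
    have hprod : ∏ i ∈ Finset.univ.filter (fun i => ¬ p i),
        g i ((Equiv.piEquivPiSubtypeProd p X).symm (y, z) i)
        = ∏ j : {i // ¬ p i}, g j.1 (z j) := by
      rw [Finset.prod_subtype (p := fun i => ¬ p i) (Finset.univ.filter (fun i => ¬ p i))
        (fun i => by simp) (fun i => g i ((Equiv.piEquivPiSubtypeProd p X).symm (y, z) i))]
      apply Finset.prod_congr rfl
      intro j _
      rw [Equiv.piEquivPiSubtypeProd_symm_apply, dif_neg j.2]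
    rw [hprod, if_congr hcond rfl rfl]
  simp_rw [key]
  have swap : ∀ y : ∀ i : {i // p i}, X i.1,
      (∑ z : ∀ i : {i // ¬ p i}, X i.1, if y = (fun i : {i // p i} => x₀ i.1) then
        ∏ j : {i // ¬ p i}, g j.1 (z j) else 0)
      = if y = (fun i : {i // p i} => x₀ i.1) then
        (∑ z : ∀ i : {i // ¬ p i}, X i.1, ∏ j : {i // ¬ p i}, g j.1 (z j)) else 0 := by
    intro y; split <;> simp
  simp_rw [swap]
  rw [Finset.sum_ite_eq' Finset.univ (fun i : {i // p i} => x₀ i.1),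
    if_pos (Finset.mem_univ _),
    Finset.prod_subtype (p := fun i => ¬ p i) (Finset.univ.filter (fun i => ¬ p i))
      (fun i => by simp) (fun i => ∑ a, g i a),
    Finset.prod_univ_sum, Fintype.piFinset_univ]


/-- Pinned marginal density on coordinates `≤ k`, as a function on the full space. -/
noncomputable def Mle (k : ℕ) (ω : Meas X) (x : ∀ i, X i) : ℝ :=
  ∑ x' : ∀ i, X i, if (∀ i : Fin (n + 1), i.val ≤ k → x' i = x i) then ω x' else 0

/-- The measure after applying the recombinators at all links `≥ k`. -/
noncomputable def nu (ω : Meas X) (k : ℕ) : Meas X :=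
  fun x => Mle X k ω x *
    ∏ i ∈ Finset.univ.filter (fun i : Fin (n + 1) => ¬ i.val ≤ k), marg1 X i ω (x i)

/-- Auxiliary per-coordinate weight functions. -/
noncomputable def gaux (k : ℕ) (ω : Meas X) (x : ∀ i, X i) : ∀ i : Fin (n + 1), X i → ℝ :=
  fun i a => if i.val = k + 1 then
      (∑ x' : ∀ j, X j, if ((∀ j : Fin (n + 1), j.val ≤ k → x' j = x j) ∧ x' i = a)
        then ω x' else 0)
    else marg1 X i ω a

lemma gaux_of_ne {k : ℕ} (ω : Meas X) (x : ∀ i, X i) {i : Fin (n + 1)} (h : ¬ i.val = k + 1)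
    (a : X i) : gaux X k ω x i a = marg1 X i ω a := by
  simp only [gaux]; rw [if_neg h]

lemma gaux_of_eq {k : ℕ} (ω : Meas X) (x : ∀ i, X i) (h : k + 1 < n + 1) (a : X ⟨k + 1, h⟩) :
    gaux X k ω x ⟨k + 1, h⟩ a
      = ∑ x' : ∀ j, X j, if ((∀ j : Fin (n + 1), j.val ≤ k → x' j = x j) ∧ x' ⟨k + 1, h⟩ = a)
          then ω x' else 0 := by
  simp only [gaux, if_true]

lemma tv_eq_mass {ω : Meas X} (h : Pos X ω) : tv X ω = mass X ω :=
  Finset.sum_congr rfl fun x _ => abs_of_nonneg (h x)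

lemma ne_zero_of_mass_eq_one {ω : Meas X} (hm : mass X ω = 1) : ω ≠ 0 := by
  intro h; rw [h] at hm; simp [mass] at hm

lemma sum_marg1 (i : Fin (n + 1)) (ω : Meas X) : ∑ a, marg1 X i ω a = mass X ω := by
  unfold marg1 mass
  rw [Finset.sum_comm]
  apply Finset.sum_congr rfl
  intro x _
  simp

lemma marg_apply_proj (p : Fin (n + 1) → Prop) [DecidablePred p] (ω : Meas X) (x : ∀ i, X i) :
    marg X p ω (fun i => x i.1)
      = ∑ x' : ∀ i, X i, if (∀ i, p i → x' i = x i) then ω x' else 0 := by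
  unfold marg
  exact Finset.sum_congr rfl fun x' _ => if_congr (by simp [Subtype.forall]) rfl rfl

lemma filter_not_le_eq {k : ℕ} (hk : k < n) :
    Finset.univ.filter (fun i : Fin (n + 1) => ¬ i.val ≤ k)
      = insert (⟨k + 1, by omega⟩ : Fin (n + 1))
          (Finset.univ.filter (fun i : Fin (n + 1) => ¬ i.val ≤ k + 1)) := by
  ext i
  simp only [Finset.mem_insert, Finset.mem_filter, Finset.mem_univ, true_and, Fin.ext_iff]
  omega

lemma not_mem_filter_succ (k : ℕ) (h : k + 1 < n + 1) :
    (⟨k + 1, h⟩ : Fin (n + 1)) ∉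
      Finset.univ.filter (fun i : Fin (n + 1) => ¬ i.val ≤ k + 1) := by
  simp

lemma pos_nu (ω : Meas X) (h : Pos X ω) (k : ℕ) : Pos X (nu X ω k) := by
  intro x
  unfold nu Mle marg1
  apply mul_nonneg
  · apply Finset.sum_nonneg; intro x' _; split
    exacts [h x', le_refl 0]
  · apply Finset.prod_nonneg; intro i _
    apply Finset.sum_nonneg; intro x' _; split
    exacts [h x', le_refl 0]

lemma mass_nu (ω : Meas X) (hm : mass X ω = 1) (k : ℕ) : mass X (nu X ω k) = 1 := by
  unfold mass nu Mle
  simp_rw [Finset.sum_mul, ite_mul, zero_mul]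
  rw [Finset.sum_comm]
  have key : ∀ x' : ∀ i, X i,
      (∑ x : ∀ i, X i, if (∀ i : Fin (n + 1), i.val ≤ k → x' i = x i) then
        ω x' * ∏ i ∈ Finset.univ.filter (fun i : Fin (n + 1) => ¬ i.val ≤ k),
          marg1 X i ω (x i) else 0)
      = ω x' := by
    intro x'
    have h1 : (∑ x : ∀ i, X i, if (∀ i : Fin (n + 1), i.val ≤ k → x' i = x i) then
        ω x' * ∏ i ∈ Finset.univ.filter (fun i : Fin (n + 1) => ¬ i.val ≤ k),
          marg1 X i ω (x i) else 0)
        = ω x' * ∑ x : ∀ i, X i, if (∀ i : Fin (n + 1), i.val ≤ k → x i = x' i) then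
            ∏ i ∈ Finset.univ.filter (fun i : Fin (n + 1) => ¬ i.val ≤ k),
              marg1 X i ω (x i) else 0 := by
      rw [Finset.mul_sum]
      apply Finset.sum_congr rfl
      intro x _
      rw [mul_ite, mul_zero]
      exact if_congr ⟨fun h i hi => (h i hi).symm, fun h i hi => (h i hi).symm⟩ rfl rfl
    rw [h1, pinprod X (fun i => i.val ≤ k) x' (fun i a => marg1 X i ω a)]
    simp [sum_marg1, hm]
  rw [Finset.sum_congr rfl (fun x' _ => key x')]
  exact hm

lemma Mle_nu (ω : Meas X) (hm : mass X ω = 1) {k : ℕ} (hk : k < n) (x : ∀ i, X i) :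
    (∑ x₁ : ∀ i, X i, if (∀ i : Fin (n + 1), i.val ≤ k → x₁ i = x i)
        then nu X ω (k + 1) x₁ else 0)
      = Mle X k ω x := by
  have hk1 : k + 1 < n + 1 := by omega
  have step1 : ∀ x₁ : ∀ i, X i, (∀ i : Fin (n + 1), i.val ≤ k → x₁ i = x i) →
      nu X ω (k + 1) x₁
        = ∏ i ∈ Finset.univ.filter (fun i : Fin (n + 1) => ¬ i.val ≤ k),
            gaux X k ω x i (x₁ i) := by
    intro x₁ hpin
    rw [filter_not_le_eq hk, Finset.prod_insert (not_mem_filter_succ k hk1)]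
    have hA : Mle X (k + 1) ω x₁ = gaux X k ω x ⟨k + 1, hk1⟩ (x₁ ⟨k + 1, hk1⟩) := by
      rw [gaux_of_eq]
      apply Finset.sum_congr rfl
      intro x' _
      apply if_congr _ rfl rfl
      constructor
      · intro hc
        exact ⟨fun j hj => (hc j (by omega)).trans (hpin j hj), hc _ (Nat.le_refl _)⟩
      · rintro ⟨h1, h2⟩ j hj
        by_cases hjk : j.val ≤ k
        · exact (h1 j hjk).trans (hpin j hjk).symm
        · have hj' : j = ⟨k + 1, hk1⟩ := Fin.ext (show j.val = k + 1 by omega)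
          rw [hj']; exact h2
    have hB : ∀ i ∈ Finset.univ.filter (fun i : Fin (n + 1) => ¬ i.val ≤ k + 1),
        marg1 X i ω (x₁ i) = gaux X k ω x i (x₁ i) := by
      intro i hi
      simp only [Finset.mem_filter] at hi
      rw [gaux_of_ne X ω x (by omega)]
    unfold nu
    rw [hA, Finset.prod_congr rfl hB]
  have hsum : (∑ x₁ : ∀ i, X i, if (∀ i : Fin (n + 1), i.val ≤ k → x₁ i = x i)
        then nu X ω (k + 1) x₁ else 0)
      = ∑ x₁ : ∀ i, X i, if (∀ i : Fin (n + 1), i.val ≤ k → x₁ i = x i)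
        then ∏ i ∈ Finset.univ.filter (fun i : Fin (n + 1) => ¬ i.val ≤ k),
          gaux X k ω x i (x₁ i) else 0 := by
    apply Finset.sum_congr rfl
    intro x₁ _
    by_cases h : (∀ i : Fin (n + 1), i.val ≤ k → x₁ i = x i)
    · rw [if_pos h, if_pos h, step1 x₁ h]
    · rw [if_neg h, if_neg h]
  rw [hsum, pinprod X (fun i => i.val ≤ k) x (gaux X k ω x),
    filter_not_le_eq hk, Finset.prod_insert (not_mem_filter_succ k hk1)]
  have hfirst : (∑ a, gaux X k ω x ⟨k + 1, hk1⟩ a) = Mle X k ω x := by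
    simp_rw [gaux_of_eq X ω x hk1]
    rw [Finset.sum_comm]
    unfold Mle
    apply Finset.sum_congr rfl
    intro x' _
    by_cases hp : (∀ j : Fin (n + 1), j.val ≤ k → x' j = x j)
    · rw [if_pos hp]
      rw [Finset.sum_congr rfl (fun a _ => if_congr (and_iff_right hp) rfl rfl),
        Finset.sum_ite_eq Finset.univ (x' ⟨k + 1, hk1⟩) (fun _ => ω x'),
        if_pos (Finset.mem_univ _)]
    · rw [if_neg hp]
      exact Finset.sum_eq_zero fun a _ => if_neg (fun hc => hp hc.1)
  have hrest : (∏ i ∈ Finset.univ.filter (fun i : Fin (n + 1) => ¬ i.val ≤ k + 1),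
      ∑ a, gaux X k ω x i a) = 1 := by
    apply Finset.prod_eq_one
    intro i hi
    simp only [Finset.mem_filter] at hi
    have : ∀ a, gaux X k ω x i a = marg1 X i ω a := fun a => gaux_of_ne X ω x (by omega) a
    simp_rw [this]
    rw [sum_marg1, hm]
  rw [hfirst, hrest, mul_one]

lemma Mgt_nu (ω : Meas X) {k : ℕ} (hk : k < n) (x : ∀ i, X i) :
    (∑ x₁ : ∀ i, X i, if (∀ i : Fin (n + 1), ¬ i.val ≤ k → x₁ i = x i)
        then nu X ω (k + 1) x₁ else 0)
      = ∏ i ∈ Finset.univ.filter (fun i : Fin (n + 1) => ¬ i.val ≤ k), marg1 X i ω (x i) := by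
  have hk1 : k + 1 < n + 1 := by omega
  have step1 : ∀ x₁ : ∀ i, X i, (∀ i : Fin (n + 1), ¬ i.val ≤ k → x₁ i = x i) →
      nu X ω (k + 1) x₁ = Mle X (k + 1) ω x₁ *
        ∏ i ∈ Finset.univ.filter (fun i : Fin (n + 1) => ¬ i.val ≤ k + 1),
          marg1 X i ω (x i) := by
    intro x₁ hpin
    unfold nu
    congr 1
    apply Finset.prod_congr rfl
    intro i hi
    simp only [Finset.mem_filter] at hi
    rw [hpin i (by omega)]
  have hsum : (∑ x₁ : ∀ i, X i, if (∀ i : Fin (n + 1), ¬ i.val ≤ k → x₁ i = x i)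
        then nu X ω (k + 1) x₁ else 0)
      = (∑ x₁ : ∀ i, X i, if (∀ i : Fin (n + 1), ¬ i.val ≤ k → x₁ i = x i)
          then Mle X (k + 1) ω x₁ else 0) *
        ∏ i ∈ Finset.univ.filter (fun i : Fin (n + 1) => ¬ i.val ≤ k + 1),
          marg1 X i ω (x i) := by
    rw [Finset.sum_mul]
    apply Finset.sum_congr rfl
    intro x₁ _
    rw [ite_mul, zero_mul]
    by_cases h : (∀ i : Fin (n + 1), ¬ i.val ≤ k → x₁ i = x i)
    · rw [if_pos h, if_pos h, step1 x₁ h]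
    · rw [if_neg h, if_neg h]
  have hkey : (∑ x₁ : ∀ i, X i, if (∀ i : Fin (n + 1), ¬ i.val ≤ k → x₁ i = x i)
        then Mle X (k + 1) ω x₁ else 0)
      = marg1 X ⟨k + 1, hk1⟩ ω (x ⟨k + 1, hk1⟩) := by
    unfold Mle
    have h2 : ∀ x₁ : ∀ i, X i, (if (∀ i : Fin (n + 1), ¬ i.val ≤ k → x₁ i = x i)
        then (∑ x' : ∀ i, X i, if (∀ i : Fin (n + 1), i.val ≤ k + 1 → x' i = x₁ i)
          then ω x' else 0) else 0)
        = ∑ x' : ∀ i, X i, if ((∀ i : Fin (n + 1), ¬ i.val ≤ k → x₁ i = x i)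
            ∧ (∀ i : Fin (n + 1), i.val ≤ k + 1 → x' i = x₁ i)) then ω x' else 0 := by
      intro x₁
      by_cases h : (∀ i : Fin (n + 1), ¬ i.val ≤ k → x₁ i = x i)
      · rw [if_pos h]
        exact Finset.sum_congr rfl fun x' _ => (if_congr (and_iff_right h) rfl rfl).symm
      · rw [if_neg h]
        exact (Finset.sum_eq_zero fun x' _ => if_neg (fun hc => h hc.1)).symm
    simp_rw [h2]
    rw [Finset.sum_comm]
    unfold marg1
    apply Finset.sum_congr rfl
    intro x' _
    have hiff : ∀ x₁ : ∀ i, X i,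
        ((∀ i : Fin (n + 1), ¬ i.val ≤ k → x₁ i = x i)
          ∧ (∀ i : Fin (n + 1), i.val ≤ k + 1 → x' i = x₁ i))
        ↔ (x₁ = (fun i => if i.val ≤ k then x' i else x i)
            ∧ x' ⟨k + 1, hk1⟩ = x ⟨k + 1, hk1⟩) := by
      intro x₁
      constructor
      · rintro ⟨hP, hQ⟩
        constructor
        · funext i
          by_cases hik : i.val ≤ k
          · rw [if_pos hik]; exact (hQ i (by omega)).symm
          · rw [if_neg hik]; exact hP i hik
        · exact (hQ _ (Nat.le_refl _)).trans (hP _ (Nat.not_succ_le_self k))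
      · rintro ⟨hm', hc⟩
        subst hm'
        constructor
        · intro i hi
          exact if_neg hi
        · intro j hj
          by_cases hjk : j.val ≤ k
          · exact (if_pos hjk).symm
          · have hj' : j = ⟨k + 1, hk1⟩ := Fin.ext (show j.val = k + 1 by omega)
            rw [hj']
            show x' ⟨k + 1, hk1⟩ = if (k + 1 : ℕ) ≤ k then x' ⟨k + 1, hk1⟩ else x ⟨k + 1, hk1⟩
            rw [if_neg (Nat.not_succ_le_self k)]
            exact hc
    have h3 : ∀ x₁ : ∀ i, X i, (if ((∀ i : Fin (n + 1), ¬ i.val ≤ k → x₁ i = x i)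
          ∧ (∀ i : Fin (n + 1), i.val ≤ k + 1 → x' i = x₁ i)) then ω x' else 0)
        = if (x₁ = (fun i => if i.val ≤ k then x' i else x i)) then
            (if x' ⟨k + 1, hk1⟩ = x ⟨k + 1, hk1⟩ then ω x' else 0) else 0 := by
      intro x₁
      rw [if_congr (hiff x₁) rfl rfl, ite_and]
    simp_rw [h3]
    rw [Finset.sum_ite_eq' Finset.univ (fun i : Fin (n + 1) => if i.val ≤ k then x' i else x i)
      (fun _ => if x' ⟨k + 1, hk1⟩ = x ⟨k + 1, hk1⟩ then ω x' else 0),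
      if_pos (Finset.mem_univ _)]
  rw [hsum, hkey, filter_not_le_eq hk, Finset.prod_insert (not_mem_filter_succ k hk1)]

lemma R_nu (ω : Meas X) (h : Pos X ω) (hm : mass X ω = 1) {k : ℕ} (hk : k < n) :
    R X ⟨k, hk⟩ (nu X ω (k + 1)) = nu X ω k := by
  have hpos := pos_nu X ω h (k + 1)
  have hmass := mass_nu X ω hm (k + 1)
  have hne : nu X ω (k + 1) ≠ 0 := ne_zero_of_mass_eq_one X hmass
  have htv : tv X (nu X ω (k + 1)) = 1 := by rw [tv_eq_mass X hpos, hmass]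
  unfold R
  rw [if_neg hne, htv, inv_one, one_smul]
  funext x
  unfold prodM
  rw [marg_apply_proj, marg_apply_proj]
  show (∑ x₁ : ∀ i, X i, if (∀ i : Fin (n + 1), i.val ≤ k → x₁ i = x i)
        then nu X ω (k + 1) x₁ else 0) *
      (∑ x₁ : ∀ i, X i, if (∀ i : Fin (n + 1), ¬ i.val ≤ k → x₁ i = x i)
        then nu X ω (k + 1) x₁ else 0) = nu X ω k x
  rw [Mle_nu X ω hm hk x, Mgt_nu X ω hk x]
  rfl

lemma nu_n (ω : Meas X) : nu X ω n = ω := by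
  funext x
  unfold nu Mle
  have h1 : Finset.univ.filter (fun i : Fin (n + 1) => ¬ i.val ≤ n) = ∅ :=
    Finset.eq_empty_iff_forall_notMem.mpr (fun i hi => by
      simp only [Finset.mem_filter] at hi
      exact hi.2 (Nat.lt_succ_iff.mp i.isLt))
  rw [h1, Finset.prod_empty, mul_one]
  have h2 : ∀ x₁ : ∀ i, X i, (∀ i : Fin (n + 1), i.val ≤ n → x₁ i = x i) ↔ x₁ = x := by
    intro x₁
    constructor
    · intro h; funext i; exact h i (Nat.lt_succ_iff.mp i.isLt)
    · intro h i _; rw [h]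
  simp_rw [h2]
  rw [Finset.sum_ite_eq' Finset.univ x (fun x₁ => ω x₁), if_pos (Finset.mem_univ _)]

lemma nu_zero (ω : Meas X) : nu X ω 0 = fun x => ∏ i, marg1 X i ω (x i) := by
  funext x
  unfold nu Mle
  rw [← Finset.mul_prod_erase Finset.univ (fun i => marg1 X i ω (x i)) (Finset.mem_univ 0)]
  have h2 : Finset.univ.filter (fun i : Fin (n + 1) => ¬ i.val ≤ 0)
      = Finset.univ.erase 0 := by
    ext i
    simp only [Finset.mem_filter, Finset.mem_univ, true_and, Finset.mem_erase, and_true,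
      not_le, Nat.pos_iff_ne_zero, ne_eq]
    exact not_congr ⟨fun h => Fin.ext (by simpa using h), fun h => by simp [h]⟩
  rw [h2]
  congr 1
  unfold marg1
  apply Finset.sum_congr rfl
  intro x₁ _
  apply if_congr _ rfl rfl
  constructor
  · intro h
    exact h 0 (by simp)
  · intro h i hi
    have : i = 0 := Fin.ext (by simpa using hi)
    rw [this]; exact h

lemma foldr_drop (ω : Meas X) (h : Pos X ω) (hm : mass X ω = 1) :
    ∀ (j k : ℕ), k + j = n →
      List.foldr (fun α ν => R X α ν) ω ((List.finRange n).drop k) = nu X ω k := by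
  intro j
  induction j with
  | zero =>
    intro k hkn
    have hdrop : (List.finRange n).drop k = [] := by
      apply List.drop_eq_nil_of_le
      rw [List.length_finRange]
      omega
    rw [hdrop, List.foldr_nil, show k = n by omega, nu_n]
  | succ j ih =>
    intro k hkn
    have hkn' : k < n := by omega
    have hlen : k < (List.finRange n).length := by rw [List.length_finRange]; exact hkn'
    rw [List.drop_eq_getElem_cons hlen, List.foldr_cons, ih (k + 1) (by omega)]
    have hget : (List.finRange n)[k] = (⟨k, hkn'⟩ : Fin n) := by
      apply Fin.ext; simp
    rw [hget]
    exact R_nu X ω h hm hkn'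

lemma RG_univ_eq (ω : Meas X) (h : Pos X ω) (hm : mass X ω = 1) :
    RG X Finset.univ ω = fun x => ∏ i, marg1 X i ω (x i) := by
  unfold RG
  rw [Fin.sort_univ]
  have h0 := foldr_drop X ω h hm n 0 (by omega)
  rw [List.drop_zero] at h0
  rw [h0, nu_zero]

end Aux

/-- convergence to the product measure: if all `ρ_α > 0` and `ω₀` is
a probability measure, the solution `ω_t = ∑_{G⊆L} a_G(t) R_G(ω₀)` converges in
total variation norm, as `t → ∞`, to the complete product measure
`R_L(ω₀) = ⊗ᵢ (πᵢ.ω₀)` of the one-site marginals of `ω₀`. -/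
theorem sol_tendsto_product (ρ : Fin n → ℝ) (hρ : ∀ α, 0 < ρ α)
    (ω₀ : Meas X) (h₀ : Pos X ω₀) (hm : mass X ω₀ = 1) :
    RG X Finset.univ ω₀ = (fun x => ∏ i, marg1 X i ω₀ (x i)) ∧
    Filter.Tendsto (fun t => tv X (sol X ρ ω₀ t - RG X Finset.univ ω₀))
      Filter.atTop (nhds 0) := by
  have hprod := RG_univ_eq X ω₀ h₀ hm
  refine ⟨hprod, ?_⟩
  have hlim : ∀ G : Finset (Fin n), Filter.Tendsto (coeffA ρ G)
      Filter.atTop (nhds (if G = Finset.univ then 1 else 0)) := by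
    intro G
    have he : ∀ α : Fin n, Filter.Tendsto (fun t => Real.exp (-(ρ α * t)))
        Filter.atTop (nhds 0) := by
      intro α
      apply Real.tendsto_exp_atBot.comp
      exact Filter.tendsto_neg_atTop_atBot.comp
        (Filter.Tendsto.const_mul_atTop (hρ α) Filter.tendsto_id)
    have h1 : Filter.Tendsto (fun t => ∏ α ∈ Gᶜ, Real.exp (-(ρ α * t))) Filter.atTop
        (nhds (∏ _α ∈ Gᶜ, (0:ℝ))) := tendsto_finset_prod _ (fun α _ => he α)
    have h2 : Filter.Tendsto (fun t => ∏ β ∈ G, (1 - Real.exp (-(ρ β * t)))) Filter.atTop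
        (nhds (∏ _β ∈ G, (1:ℝ))) := tendsto_finset_prod _ (fun β _ => by
          simpa using (tendsto_const_nhds.sub (he β)))
    have h4 : Filter.Tendsto (coeffA ρ G) Filter.atTop
        (nhds ((∏ _α ∈ Gᶜ, (0:ℝ)) * ∏ _β ∈ G, (1:ℝ))) := h1.mul h2
    have h5 : (∏ _α ∈ Gᶜ, (0:ℝ)) * ∏ _β ∈ G, (1:ℝ) = if G = Finset.univ then 1 else 0 := by
      by_cases hG : G = Finset.univ
      · subst hG; simp
      · rw [if_neg hG]
        have hex : ∃ α, α ∉ G := by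
          by_contra hc
          push_neg at hc
          exact hG (Finset.eq_univ_iff_forall.mpr hc)
        obtain ⟨α, hα⟩ := hex
        rw [Finset.prod_eq_zero (Finset.mem_compl.mpr hα) rfl, zero_mul]
    rwa [h5] at h4
  have hpt : ∀ x : ∀ i, X i, Filter.Tendsto (fun t => sol X ρ ω₀ t x) Filter.atTop
      (nhds (RG X Finset.univ ω₀ x)) := by
    intro x
    have hs : ∀ t, sol X ρ ω₀ t x
        = ∑ G ∈ (Finset.univ : Finset (Fin n)).powerset, coeffA ρ G t * RG X G ω₀ x := by
      intro t
      unfold sol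
      rw [Finset.sum_apply]
      exact Finset.sum_congr rfl fun G _ => rfl
    simp only [hs]
    have hone : (RG X Finset.univ ω₀ x)
        = ∑ G ∈ (Finset.univ : Finset (Fin n)).powerset,
            (if G = Finset.univ then (1:ℝ) else 0) * RG X G ω₀ x := by
      symm
      rw [Finset.sum_eq_single Finset.univ]
      · simp
      · intro G _ hG; rw [if_neg hG, zero_mul]
      · intro h; exact absurd (Finset.mem_powerset_self _) h
    rw [hone]
    exact tendsto_finset_sum _ (fun G _ => (hlim G).mul_const _)
  have h2 : Filter.Tendsto (fun t => sol X ρ ω₀ t) Filter.atTop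
      (nhds (RG X Finset.univ ω₀)) := tendsto_pi_nhds.mpr hpt
  have h3 : Filter.Tendsto (fun t => sol X ρ ω₀ t - RG X Finset.univ ω₀) Filter.atTop
      (nhds 0) := by
    simpa using h2.sub_const (RG X Finset.univ ω₀)
  have hcont : Continuous (tv X) := by
    unfold tv
    exact continuous_finset_sum _ (fun x _ => (continuous_apply x).abs)
  have h4 := (hcont.tendsto 0).comp h3
  simpa [tv, Function.comp_def] using h4


end Recombination
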